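/- If state σ is reached from the initial state of n chips at the origin, then S_{σ^L}(b/a) = n − a·(f_0(σ) − f_1(σ)) and S_{σ^R}(b/a) = a·(f_0(σ) − f_1(σ)). In particular both values are integers. -/

import Mathlib

/-- Firing at vertex `i` in the `a`-`b` chip-firing game on `ℤ`:
requires at least `a+b` chips at `i`, sends `a` chips to `i-1` and `b` chips to `i+1`. -/
def fireAt (a b : ℕ) (i : ℤ) (σ σ' : ℤ →₀ ℕ) : Prop :=
  a + b ≤ σ i ∧
  σ' (i - 1) = σ (i - 1) + a ∧
  σ' i = σ i - (a + b) ∧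
  σ' (i + 1) = σ (i + 1) + b ∧
  ∀ m : ℤ, m ≠ i - 1 → m ≠ i → m ≠ i + 1 → σ' m = σ m

/-- Reachability by a finite sequence of firings. -/
def Reaches (a b : ℕ) : (ℤ →₀ ℕ) → (ℤ →₀ ℕ) → Prop :=
  Relation.ReflTransGen (fun σ σ' => ∃ i, fireAt a b i σ σ')

/-- Initial state: `n` chips at the origin. -/
noncomputable def initState (n : ℕ) : ℤ →₀ ℕ := Finsupp.single 0 n

/-- `Leads a b σ L σ'`: the list `L` of vertices, fired in order (each legal),
leads from state `σ` to state `σ'`. -/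
inductive Leads (a b : ℕ) : (ℤ →₀ ℕ) → List ℤ → (ℤ →₀ ℕ) → Prop
  | nil (σ : ℤ →₀ ℕ) : Leads a b σ [] σ
  | cons {σ τ σ' : ℤ →₀ ℕ} {i : ℤ} {L : List ℤ} :
      fireAt a b i σ τ → Leads a b τ L σ' → Leads a b σ (i :: L) σ'

/-- The state polynomial `S_σ(t) = Σ_m s_m t^{-m}` evaluated at `t`. -/
noncomputable def statePoly (σ : ℤ →₀ ℕ) (t : ℚ) : ℚ :=
  ∑ m ∈ σ.support, (σ m : ℚ) * t ^ (-m)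

/-- The left part `S_{σ^L}(t) = Σ_{m ≤ 0} s_m t^{-m}`. -/
noncomputable def statePolyL (σ : ℤ →₀ ℕ) (t : ℚ) : ℚ :=
  ∑ m ∈ σ.support.filter (fun m => m ≤ 0), (σ m : ℚ) * t ^ (-m)

/-- The right part `S_{σ^R}(t) = Σ_{m ≥ 1} s_m t^{-m}`. -/
noncomputable def statePolyR (σ : ℤ →₀ ℕ) (t : ℚ) : ℚ :=
  ∑ m ∈ σ.support.filter (fun m => 1 ≤ m), (σ m : ℚ) * t ^ (-m)

/-- `M_σ = Σ_m m·s_m`. -/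
def Mval (σ : ℤ →₀ ℕ) : ℤ := ∑ m ∈ σ.support, m * (σ m : ℤ)

/-- A final (stable) state of the game started with `n` chips at the origin. -/
def IsFinalState (a b n : ℕ) (σ : ℤ →₀ ℕ) : Prop :=
  Reaches a b (initState n) σ ∧ ∀ i : ℤ, σ i < a + b

/-- Firing at vertex `i ≥ 1` on the right part: chips sent to vertex `0` are discarded. -/
def rfireAt (a b : ℕ) (i : ℤ) (σ σ' : ℤ →₀ ℕ) : Prop :=
  1 ≤ i ∧ a + b ≤ σ i ∧
  (∀ m : ℤ, m ≤ 0 → σ' m = 0) ∧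
  σ' i = σ i - (a + b) ∧
  σ' (i + 1) = σ (i + 1) + b ∧
  (1 ≤ i - 1 → σ' (i - 1) = σ (i - 1) + a) ∧
  ∀ m : ℤ, 1 ≤ m → m ≠ i - 1 → m ≠ i → m ≠ i + 1 → σ' m = σ m

/-- `Settles a b σ τ`: `τ` is a stable configuration obtained from `σ`
by firings among the vertices `≥ 1`. -/
def Settles (a b : ℕ) (σ τ : ℤ →₀ ℕ) : Prop :=
  Relation.ReflTransGen (fun x y => ∃ i, rfireAt a b i x y) σ τ ∧ ∀ i : ℤ, τ i < a + b

/-- The settlement sequence: `ξ 0` is empty and `ξ (k+1)` is obtained from `ξ k`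
by adding `b` chips at vertex `1` and stabilizing within the vertices `≥ 1`. -/
def SettlementSeq (a b : ℕ) (ξ : ℕ → ℤ →₀ ℕ) : Prop :=
  ξ 0 = 0 ∧ ∀ k : ℕ, Settles a b (ξ k + Finsupp.single 1 b) (ξ (k + 1))

/-- `RLeads a b σ L σ'`: the list `L` of vertices fired in order (right-part firings)
leads from `σ` to `σ'`. -/
inductive RLeads (a b : ℕ) : (ℤ →₀ ℕ) → List ℤ → (ℤ →₀ ℕ) → Prop
  | nil (σ : ℤ →₀ ℕ) : RLeads a b σ [] σ
  | cons {σ τ σ' : ℤ →₀ ℕ} {i : ℤ} {L : List ℤ} :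
      rfireAt a b i σ τ → RLeads a b τ L σ' → RLeads a b σ (i :: L) σ'

/-- The `m`-th tetrahedral number. -/
def Te (m : ℕ) : ℕ := m * (m + 1) * (m + 2) / 6


section Aux

private lemma statePolyL_eq_sum (σ : ℤ →₀ ℕ) (t : ℚ) (s : Finset ℤ) (hs : σ.support ⊆ s) :
    statePolyL σ t = ∑ m ∈ s.filter (fun m => m ≤ 0), (σ m : ℚ) * t ^ (-m) := by
  refine Finset.sum_subset (Finset.filter_subset_filter _ hs) ?_
  intro m hm hm2
  have : σ m = 0 := by
    by_contra h
    exact hm2 (Finset.mem_filter.mpr ⟨Finsupp.mem_support_iff.mpr h, (Finset.mem_filter.mp hm).2⟩)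
  simp [this]

private lemma statePolyR_eq_sum (σ : ℤ →₀ ℕ) (t : ℚ) (s : Finset ℤ) (hs : σ.support ⊆ s) :
    statePolyR σ t = ∑ m ∈ s.filter (fun m => 1 ≤ m), (σ m : ℚ) * t ^ (-m) := by
  refine Finset.sum_subset (Finset.filter_subset_filter _ hs) ?_
  intro m hm hm2
  have : σ m = 0 := by
    by_contra h
    exact hm2 (Finset.mem_filter.mpr ⟨Finsupp.mem_support_iff.mpr h, (Finset.mem_filter.mp hm).2⟩)
  simp [this]

private lemma statePolyL_sub (σ σ' : ℤ →₀ ℕ) (t : ℚ) (T : Finset ℤ)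
    (hT : ∀ m ∈ T, m ≤ 0) (hout : ∀ m : ℤ, m ≤ 0 → m ∉ T → σ' m = σ m) :
    statePolyL σ' t - statePolyL σ t = ∑ m ∈ T, ((σ' m : ℚ) - σ m) * t ^ (-m) := by
  set s : Finset ℤ := σ.support ∪ σ'.support ∪ T with hsdef
  have h1 : σ.support ⊆ s := fun x hx => by simp [hsdef, hx]
  have h2 : σ'.support ⊆ s := fun x hx => by simp [hsdef, hx]
  rw [statePolyL_eq_sum σ t s h1, statePolyL_eq_sum σ' t s h2, ← Finset.sum_sub_distrib]
  have hTs : T ⊆ s.filter (fun m => m ≤ 0) := by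
    intro m hm
    exact Finset.mem_filter.mpr ⟨by simp [hsdef, hm], hT m hm⟩
  rw [← Finset.sum_subset hTs]
  · apply Finset.sum_congr rfl
    intro m _; ring
  · intro m hm hm2
    have hle : m ≤ 0 := (Finset.mem_filter.mp hm).2
    rw [hout m hle hm2]; ring

private lemma statePolyR_sub (σ σ' : ℤ →₀ ℕ) (t : ℚ) (T : Finset ℤ)
    (hT : ∀ m ∈ T, 1 ≤ m) (hout : ∀ m : ℤ, 1 ≤ m → m ∉ T → σ' m = σ m) :
    statePolyR σ' t - statePolyR σ t = ∑ m ∈ T, ((σ' m : ℚ) - σ m) * t ^ (-m) := by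
  set s : Finset ℤ := σ.support ∪ σ'.support ∪ T with hsdef
  have h1 : σ.support ⊆ s := fun x hx => by simp [hsdef, hx]
  have h2 : σ'.support ⊆ s := fun x hx => by simp [hsdef, hx]
  rw [statePolyR_eq_sum σ t s h1, statePolyR_eq_sum σ' t s h2, ← Finset.sum_sub_distrib]
  have hTs : T ⊆ s.filter (fun m => 1 ≤ m) := by
    intro m hm
    exact Finset.mem_filter.mpr ⟨by simp [hsdef, hm], hT m hm⟩
  rw [← Finset.sum_subset hTs]
  · apply Finset.sum_congr rfl
    intro m _; ring
  · intro m hm hm2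
    have hle : (1:ℤ) ≤ m := (Finset.mem_filter.mp hm).2
    rw [hout m hle hm2]; ring

private lemma fire_change (a b : ℕ) (ha : 0 < a) (hb : 0 < b) (i : ℤ) (σ σ' : ℤ →₀ ℕ)
    (hf : fireAt a b i σ σ') :
    statePolyL σ' ((b : ℚ) / a) = statePolyL σ ((b : ℚ) / a)
      + (if i = 0 then -(a : ℚ) else if i = 1 then (a : ℚ) else 0) ∧
    statePolyR σ' ((b : ℚ) / a) = statePolyR σ ((b : ℚ) / a)
      + (if i = 0 then (a : ℚ) else if i = 1 then -(a : ℚ) else 0) := by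
  obtain ⟨hge, e1, e2, e3, e4⟩ := hf
  set t : ℚ := (b : ℚ) / a with htdef
  have ha' : (a : ℚ) ≠ 0 := by positivity
  have hb' : (b : ℚ) ≠ 0 := by positivity
  have ht : t ≠ 0 := by positivity
  have hat : (a : ℚ) * t = b := by rw [htdef]; field_simp
  have hbt : (b : ℚ) * t⁻¹ = a := by
    rw [htdef]; field_simp
  have c1 : (σ' (i - 1) : ℚ) - σ (i - 1) = a := by rw [e1]; push_cast; ring
  have c2 : (σ' i : ℚ) - σ i = -((a : ℚ) + b) := by
    rw [e2, Nat.cast_sub hge]; push_cast; ring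
  have c3 : (σ' (i + 1) : ℚ) - σ (i + 1) = b := by rw [e3]; push_cast; ring
  have zm1 : t ^ (-(i - 1)) = t ^ (-i) * t := by
    have h := zpow_add₀ ht (-i) 1
    rw [zpow_one] at h
    rw [show -(i - 1) = -i + 1 by ring, h]
  have zp1 : t ^ (-(i + 1)) = t ^ (-i) * t⁻¹ := by
    have h := zpow_add₀ ht (-i) (-1)
    rw [zpow_neg_one] at h
    rw [show -(i + 1) = -i + -1 by ring, h]
  constructor
  · rw [← sub_eq_iff_eq_add']
    rcases lt_trichotomy i 0 with hi | hi | hi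
    · -- i ≤ -1 : all of i-1, i, i+1 are ≤ 0
      rw [statePolyL_sub σ σ' t {i - 1, i, i + 1} (by intro m hm; simp at hm; omega)
        (by intro m hm1 hm2; simp at hm2; exact e4 m (by omega) (by omega) (by omega))]
      have hd1 : (i:ℤ) - 1 ∉ ({i, i + 1} : Finset ℤ) := by simp; omega
      have hd2 : (i:ℤ) ∉ ({i + 1} : Finset ℤ) := by simp
      rw [Finset.sum_insert hd1, Finset.sum_insert hd2, Finset.sum_singleton,
        c1, c2, c3, zm1, zp1]
      have hne0 : i ≠ 0 := by omega
      have hne1 : i ≠ 1 := by omega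
      rw [if_neg hne0, if_neg hne1]
      linear_combination (t ^ (-i)) * hat + (t ^ (-i)) * hbt
    · -- i = 0
      subst hi
      rw [statePolyL_sub σ σ' t {-1, 0} (by intro m hm; simp at hm; omega)
        (by intro m hm1 hm2; simp at hm2; exact e4 m (by omega) (by omega) (by omega))]
      have hd : (-1 : ℤ) ∉ ({0} : Finset ℤ) := by simp
      rw [Finset.sum_insert hd, Finset.sum_singleton]
      have h1 : (σ' (-1) : ℚ) - σ (-1) = a := by
        have : (-1 : ℤ) = 0 - 1 := by ring
        rw [this]; exact c1
      have h2 : (σ' 0 : ℚ) - σ 0 = -((a : ℚ) + b) := c2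
      rw [h1, h2]
      rw [if_pos rfl]
      have hz1 : t ^ (-(-1 : ℤ)) = t := by norm_num
      have hz0 : t ^ (-(0 : ℤ)) = 1 := by norm_num
      rw [hz1, hz0]
      linear_combination hat
    · rcases eq_or_lt_of_le (by omega : (1:ℤ) ≤ i) with hi1 | hi1
      · -- i = 1
        rw [statePolyL_sub σ σ' t {0} (by intro m hm; simp at hm; omega)
          (by intro m hm1 hm2; simp at hm2; exact e4 m (by omega) (by omega) (by omega))]
        rw [Finset.sum_singleton]
        have h1 : (σ' 0 : ℚ) - σ 0 = a := by
          have : (0 : ℤ) = i - 1 := by omega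
          rw [this]; exact c1
        rw [h1]
        have hne : i ≠ 0 := by omega
        rw [if_neg hne, if_pos hi1.symm]
        norm_num
      · -- i ≥ 2
        rw [statePolyL_sub σ σ' t ∅ (by simp)
          (by intro m hm1 hm2; exact e4 m (by omega) (by omega) (by omega))]
        have : i ≠ 0 := by omega
        have : i ≠ 1 := by omega
        simp [‹i ≠ 0›, ‹i ≠ 1›]
  · rw [← sub_eq_iff_eq_add']
    rcases lt_trichotomy i 1 with hi | hi | hi
    · rcases eq_or_lt_of_le (by omega : i ≤ 0) with hi0 | hi0
      · -- i = 0 : only i+1 = 1 on the right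
        subst hi0
        rw [statePolyR_sub σ σ' t {1} (by intro m hm; simp at hm; omega)
          (by intro m hm1 hm2; simp at hm2; exact e4 m (by omega) (by omega) (by omega))]
        rw [Finset.sum_singleton]
        have h1 : (σ' 1 : ℚ) - σ 1 = b := by
          have : (1 : ℤ) = 0 + 1 := by ring
          rw [this]; exact c3
        rw [h1]
        rw [if_pos rfl]
        have : t ^ (-(1 : ℤ)) = t⁻¹ := by norm_num
        rw [this]
        linear_combination hbt
      · -- i ≤ -1 : nothing on the right
        rw [statePolyR_sub σ σ' t ∅ (by simp)
          (by intro m hm1 hm2; exact e4 m (by omega) (by omega) (by omega))]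
        have : i ≠ 0 := by omega
        have : i ≠ 1 := by omega
        simp [‹i ≠ 0›, ‹i ≠ 1›]
    · -- i = 1
      subst hi
      rw [statePolyR_sub σ σ' t {1, 2} (by intro m hm; simp at hm; omega)
        (by intro m hm1 hm2; simp at hm2; exact e4 m (by omega) (by omega) (by omega))]
      have hd : (1 : ℤ) ∉ ({2} : Finset ℤ) := by simp
      rw [Finset.sum_insert hd, Finset.sum_singleton]
      have h2 : (σ' 1 : ℚ) - σ 1 = -((a : ℚ) + b) := c2
      have h3 : (σ' 2 : ℚ) - σ 2 = b := by
        have : (2 : ℤ) = 1 + 1 := by ring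
        rw [this]; exact c3
      rw [h2, h3]
      rw [if_neg (by norm_num : (1:ℤ) ≠ 0), if_pos rfl]
      have hz1 : t ^ (-(1 : ℤ)) = t⁻¹ := by norm_num
      have hz2 : t ^ (-(2 : ℤ)) = t⁻¹ * t⁻¹ := by
        rw [show (-(2:ℤ)) = (-1) + (-1) by ring, zpow_add₀ ht, zpow_neg_one]
      rw [hz1, hz2]
      linear_combination (t⁻¹ - 1) * hbt
    · -- i ≥ 2 : all of i-1, i, i+1 are ≥ 1
      rw [statePolyR_sub σ σ' t {i - 1, i, i + 1} (by intro m hm; simp at hm; omega)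
        (by intro m hm1 hm2; simp at hm2; exact e4 m (by omega) (by omega) (by omega))]
      have hd1 : (i:ℤ) - 1 ∉ ({i, i + 1} : Finset ℤ) := by simp; omega
      have hd2 : (i:ℤ) ∉ ({i + 1} : Finset ℤ) := by simp
      rw [Finset.sum_insert hd1, Finset.sum_insert hd2, Finset.sum_singleton,
        c1, c2, c3, zm1, zp1]
      have hne0 : i ≠ 0 := by omega
      have hne1 : i ≠ 1 := by omega
      rw [if_neg hne0, if_neg hne1]
      linear_combination (t ^ (-i)) * hat + (t ^ (-i)) * hbt

private lemma leads_invariant (a b : ℕ) (ha : 0 < a) (hb : 0 < b) :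
    ∀ (L : List ℤ) (σ σ' : ℤ →₀ ℕ), Leads a b σ L σ' →
    statePolyL σ' ((b : ℚ) / a)
      = statePolyL σ ((b : ℚ) / a) - (a : ℚ) * ((L.count 0 : ℚ) - (L.count 1 : ℚ)) ∧
    statePolyR σ' ((b : ℚ) / a)
      = statePolyR σ ((b : ℚ) / a) + (a : ℚ) * ((L.count 0 : ℚ) - (L.count 1 : ℚ)) := by
  intro L
  induction L with
  | nil =>
    intro σ σ' h
    cases h
    simp
  | cons i L ih =>
    intro σ σ' h
    cases h with
    | cons hf hl =>
      rename_i τ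
      obtain ⟨ihL, ihR⟩ := ih _ _ hl
      obtain ⟨fL, fR⟩ := fire_change a b ha hb i σ τ hf
      have hc0 : ((i :: L).count 0 : ℚ) = (L.count 0 : ℚ) + (if i = 0 then 1 else 0) := by
        rcases eq_or_ne i 0 with h0 | h0 <;> simp [List.count_cons, h0]
      have hc1 : ((i :: L).count 1 : ℚ) = (L.count 1 : ℚ) + (if i = 1 then 1 else 0) := by
        rcases eq_or_ne i 1 with h0 | h0 <;> simp [List.count_cons, h0]
      rw [ihL, ihR, fL, fR, hc0, hc1] at *
      constructor
      · rcases eq_or_ne i 0 with h0 | h0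
        · simp [h0]; ring
        · rcases eq_or_ne i 1 with h1 | h1
          · simp [h1]; ring
          · simp [h0, h1]
      · rcases eq_or_ne i 0 with h0 | h0
        · simp [h0]; ring
        · rcases eq_or_ne i 1 with h1 | h1
          · simp [h1]; ring
          · simp [h0, h1]

private lemma statePolyL_init (n : ℕ) (t : ℚ) : statePolyL (initState n) t = n := by
  rw [statePolyL_eq_sum (initState n) t {0} Finsupp.support_single_subset]
  have hf : (Finset.filter (fun m : ℤ => m ≤ 0) ({0} : Finset ℤ)) = {0} := by
    ext m; simp (config := { decide := false }) only [Finset.mem_filter, Finset.mem_singleton]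
    constructor
    · rintro ⟨h, _⟩; exact h
    · rintro rfl; exact ⟨rfl, le_refl 0⟩
  rw [hf, Finset.sum_singleton]
  have h0 : (initState n) 0 = n := Finsupp.single_eq_same
  rw [h0]
  norm_num

private lemma statePolyR_init (n : ℕ) (t : ℚ) : statePolyR (initState n) t = 0 := by
  rw [statePolyR_eq_sum (initState n) t {0} Finsupp.support_single_subset]
  have hf : (Finset.filter (fun m : ℤ => 1 ≤ m) ({0} : Finset ℤ)) = ∅ := by
    ext m; simp only [Finset.mem_filter, Finset.mem_singleton, Finset.notMem_empty, iff_false]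
    rintro ⟨rfl, h⟩; omega
  rw [hf, Finset.sum_empty]

end Aux

/-- `S_{σ^L}(b/a) = n - a(f₀ - f₁)` and `S_{σ^R}(b/a) = a(f₀ - f₁)`;
in particular both values are integers. -/
theorem stmt3 (a b : ℕ) (ha : 0 < a) (hb : 0 < b) (n : ℕ) (σ : ℤ →₀ ℕ) (L : List ℤ)
    (h : Leads a b (initState n) L σ) :
    statePolyL σ ((b : ℚ) / a)
      = (n : ℚ) - (a : ℚ) * ((L.count 0 : ℚ) - (L.count 1 : ℚ)) ∧
    statePolyR σ ((b : ℚ) / a)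
      = (a : ℚ) * ((L.count 0 : ℚ) - (L.count 1 : ℚ)) ∧
    (∃ z : ℤ, statePolyL σ ((b : ℚ) / a) = z) ∧
    (∃ z : ℤ, statePolyR σ ((b : ℚ) / a) = z) := by
  obtain ⟨hL, hR⟩ := leads_invariant a b ha hb L (initState n) σ h
  rw [statePolyL_init, statePolyR_init] at *
  refine ⟨hL, by rw [hR]; ring, ?_, ?_⟩
  · exact ⟨(n : ℤ) - (a : ℤ) * ((L.count 0 : ℤ) - (L.count 1 : ℤ)), by rw [hL]; push_cast; ring⟩
  · exact ⟨(a : ℤ) * ((L.count 0 : ℤ) - (L.count 1 : ℤ)), by rw [hR]; push_cast; ring⟩
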